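/- For real numbers a and b and p ≥ 2, one has |(a+b)/2|^p + |(a-b)/2|^p ≤ (|a|^p + |b|^p)/2. -/

import Mathlib

lemma aux_add_rpow {x y p : ℝ} (hx : 0 ≤ x) (hy : 0 ≤ y) (hp : 1 ≤ p) :
    x ^ p + y ^ p ≤ (x + y) ^ p := by
  have h := NNReal.add_rpow_le_rpow_add ⟨x, hx⟩ ⟨y, hy⟩ hp
  have := NNReal.coe_le_coe.2 h
  push_cast [NNReal.coe_rpow] at this
  exact this

lemma aux_mean {x y p : ℝ} (hx : 0 ≤ x) (hy : 0 ≤ y) (hp : 1 ≤ p) :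
    ((x + y) / 2) ^ p ≤ (x ^ p + y ^ p) / 2 := by
  have h := NNReal.rpow_arith_mean_le_arith_mean2_rpow (1/2) (1/2) ⟨x, hx⟩ ⟨y, hy⟩
      (add_halves 1) hp
  have := NNReal.coe_le_coe.2 h
  push_cast [NNReal.coe_rpow] at this
  calc ((x + y) / 2) ^ p = (1/2 * x + 1/2 * y) ^ p := by ring_nf
    _ ≤ 1/2 * x ^ p + 1/2 * y ^ p := this
    _ = (x ^ p + y ^ p) / 2 := by ring

theorem clarkson_type (p a b : ℝ) (hp : 2 ≤ p) :
    |(a + b) / 2| ^ p + |(a - b) / 2| ^ p ≤ (|a| ^ p + |b| ^ p) / 2 := by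
  set u := |(a + b) / 2| with hu
  set v := |(a - b) / 2| with hv
  have hu0 : 0 ≤ u := abs_nonneg _
  have hv0 : 0 ≤ v := abs_nonneg _
  have hp2 : (1:ℝ) ≤ p / 2 := by linarith
  have hupow : u ^ p = (u ^ 2) ^ (p / 2) := by
    rw [← Real.rpow_natCast u 2, ← Real.rpow_mul hu0]
    congr 1; ring
  have hvpow : v ^ p = (v ^ 2) ^ (p / 2) := by
    rw [← Real.rpow_natCast v 2, ← Real.rpow_mul hv0]
    congr 1; ring
  have hapow : |a| ^ p = (|a| ^ 2) ^ (p / 2) := by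
    rw [← Real.rpow_natCast |a| 2, ← Real.rpow_mul (abs_nonneg a)]
    congr 1; ring
  have hbpow : |b| ^ p = (|b| ^ 2) ^ (p / 2) := by
    rw [← Real.rpow_natCast |b| 2, ← Real.rpow_mul (abs_nonneg b)]
    congr 1; ring
  have hsum : u ^ 2 + v ^ 2 = (|a| ^ 2 + |b| ^ 2) / 2 := by
    rw [hu, hv, sq_abs, sq_abs, sq_abs, sq_abs]
    ring
  calc u ^ p + v ^ p = (u ^ 2) ^ (p / 2) + (v ^ 2) ^ (p / 2) := by rw [hupow, hvpow]
    _ ≤ (u ^ 2 + v ^ 2) ^ (p / 2) := aux_add_rpow (sq_nonneg u) (sq_nonneg v) hp2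
    _ = ((|a| ^ 2 + |b| ^ 2) / 2) ^ (p / 2) := by rw [hsum]
    _ ≤ ((|a| ^ 2) ^ (p / 2) + (|b| ^ 2) ^ (p / 2)) / 2 :=
        aux_mean (sq_nonneg _) (sq_nonneg _) hp2
    _ = (|a| ^ p + |b| ^ p) / 2 := by rw [hapow, hbpow]
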